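/- Let j ≥ 1 be an integer, let k₁, k₂ be nonzero real numbers with k = k₁ + k₂ ≠ 0, let τ₁, τ₂ ∈ ℝ and τ = τ₁ + τ₂. Set σ = τ − k^{2j+1}, σ₁ = τ₁ − k₁^{2j+1}, σ₂ = τ₂ − k₂^{2j+1}. Then 3·max{|σ|, |σ₁|, |σ₂|} ≥ |σ − σ₁ − σ₂| = |k^{2j+1} − k₁^{2j+1} − k₂^{2j+1}| ≥ (2j+1)·|k|·|k₁|^j·|k₂|^j. -/

import Mathlib

open Finset

lemma choose_term_ge (j m i : ℕ) (hm : m ≤ j) (hi : i ≤ m) :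
    j.choose m ≤ j.choose i * j.choose (m - i) := by
  have h := Nat.choose_mul (n := j) hi
  have h1 : 1 ≤ m.choose i := Nat.choose_pos hi
  have h2 : (j - i).choose (m - i) ≤ j.choose (m - i) :=
    Nat.choose_le_choose _ (Nat.sub_le _ _)
  calc j.choose m ≤ j.choose m * m.choose i := Nat.le_mul_of_pos_right _ h1
    _ = j.choose i * (j - i).choose (m - i) := h
    _ ≤ j.choose i * j.choose (m - i) := Nat.mul_le_mul_left _ h2

lemma vand_ge (j m : ℕ) (hm : m ≤ j) : (m + 1) * j.choose m ≤ (2 * j).choose m := by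
  rw [two_mul, Nat.add_choose_eq, Finset.Nat.sum_antidiagonal_eq_sum_range_succ_mk]
  calc (m + 1) * j.choose m = ∑ _i ∈ range (m + 1), j.choose m := by
        rw [Finset.sum_const, card_range, smul_eq_mul]
    _ ≤ ∑ i ∈ range (m + 1), j.choose i * j.choose (m - i) := by
        refine Finset.sum_le_sum fun i hi => ?_
        exact choose_term_ge j m i hm (by simpa [Nat.lt_succ_iff] using hi)

lemma coeff_le (j m : ℕ) (hm : m ≤ j) :
    (2 * j + 1) * j.choose m ≤ (2 * j + 1).choose (m + 1) := by
  have h := Nat.add_one_mul_choose_eq (2 * j) m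
  have hv := vand_ge j m hm
  have : (2 * j + 1) * j.choose m * (m + 1) ≤ (2 * j + 1).choose (m + 1) * (m + 1) := by
    calc (2 * j + 1) * j.choose m * (m + 1) = (2 * j + 1) * ((m + 1) * j.choose m) := by ring
      _ ≤ (2 * j + 1) * (2 * j).choose m := Nat.mul_le_mul_left _ hv
      _ = (2 * j + 1).choose (m + 1) * (m + 1) := by
          simpa [Nat.succ_eq_add_one] using h
  exact Nat.le_of_mul_le_mul_right this (Nat.succ_pos m)

lemma key_ineq (j : ℕ) (hj : 1 ≤ j) (x y : ℝ) (hx : 0 ≤ x) (hy : 0 ≤ y) :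
    x ^ (2 * j + 1) + y ^ (2 * j + 1) + (2 * (j : ℝ) + 1) * x * y ^ j * (x + y) ^ j
      ≤ (x + y) ^ (2 * j + 1) := by
  have hxy : 0 ≤ x + y := by linarith
  rw [add_pow x y (2 * j + 1)]
  set f : ℕ → ℝ := fun i => x ^ i * y ^ (2 * j + 1 - i) * ((2 * j + 1).choose i : ℝ) with hf
  have hTsub : insert 0 (insert (2 * j + 1) ((range (j + 1)).image (· + 1)))
      ⊆ range (2 * j + 1 + 1) := by
    intro i hi
    simp only [Finset.mem_insert, Finset.mem_image, Finset.mem_range] at hi ⊢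
    rcases hi with rfl | rfl | ⟨m, hm, rfl⟩ <;> omega
  have h0 : (0 : ℕ) ∉ insert (2 * j + 1) ((range (j + 1)).image (· + 1)) := by
    simp only [Finset.mem_insert, Finset.mem_image, Finset.mem_range]
    push_neg
    exact ⟨by omega, fun m _ => by omega⟩
  have h1 : 2 * j + 1 ∉ (range (j + 1)).image (· + 1) := by
    simp only [Finset.mem_image, Finset.mem_range]
    push_neg
    intro m hm
    omega
  have hsub : ∑ i ∈ insert 0 (insert (2 * j + 1) ((range (j + 1)).image (· + 1))), f i
      ≤ ∑ i ∈ range (2 * j + 1 + 1), f i := by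
    refine Finset.sum_le_sum_of_subset_of_nonneg hTsub fun i _ _ => ?_
    show 0 ≤ x ^ i * y ^ (2 * j + 1 - i) * ((2 * j + 1).choose i : ℝ); positivity
  rw [Finset.sum_insert h0, Finset.sum_insert h1,
    Finset.sum_image (fun a _ b _ h => by omega)] at hsub
  have hf0 : f 0 = y ^ (2 * j + 1) := by simp [hf]
  have hfn : f (2 * j + 1) = x ^ (2 * j + 1) := by simp [hf]
  rw [hf0, hfn] at hsub
  have hmid : (2 * (j : ℝ) + 1) * x * y ^ j * (x + y) ^ j
      ≤ ∑ m ∈ range (j + 1), f (m + 1) := by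
    rw [add_pow x y j, Finset.mul_sum]
    refine Finset.sum_le_sum fun m hm => ?_
    have hmj : m ≤ j := by simpa [Nat.lt_succ_iff] using hm
    have hc : ((2 * j + 1) * j.choose m : ℝ) ≤ ((2 * j + 1).choose (m + 1) : ℝ) := by
      exact_mod_cast coeff_le j m hmj
    have e1 : j + (j - m) = 2 * j - m := by omega
    have e2 : 2 * j + 1 - (m + 1) = 2 * j - m := by omega
    calc (2 * (j : ℝ) + 1) * x * y ^ j * (x ^ m * y ^ (j - m) * (j.choose m : ℝ))
        = ((2 * j + 1) * j.choose m : ℝ) * (x ^ (m + 1) * y ^ (j + (j - m))) := by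
          rw [pow_add]; ring
      _ = ((2 * j + 1) * j.choose m : ℝ) * (x ^ (m + 1) * y ^ (2 * j - m)) := by rw [e1]
      _ ≤ ((2 * j + 1).choose (m + 1) : ℝ) * (x ^ (m + 1) * y ^ (2 * j - m)) := by
          refine mul_le_mul_of_nonneg_right hc ?_
          positivity
      _ = f (m + 1) := by simp only [hf]; rw [e2]; ring
  linarith

lemma diff_bound (j : ℕ) (hj : 1 ≤ j) (x y : ℝ) (hx : 0 < x) (hy : 0 < y) :
    (2 * (j : ℝ) + 1) * x * y ^ j * (x + y) ^ j
      ≤ (x + y) ^ (2 * j + 1) - x ^ (2 * j + 1) - y ^ (2 * j + 1) := by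
  linarith [key_ineq j hj x y hx.le hy.le]

lemma diff_bound' (j : ℕ) (hj : 1 ≤ j) (x y : ℝ) (hx : 0 < x) (hy : 0 < y) :
    (2 * (j : ℝ) + 1) * (x + y) * x ^ j * y ^ j
      ≤ (x + y) ^ (2 * j + 1) - x ^ (2 * j + 1) - y ^ (2 * j + 1) := by
  have h1 := diff_bound j hj x y hx hy
  have hpow : x ^ (j - 1) ≤ (x + y) ^ (j - 1) :=
    pow_le_pow_left₀ hx.le (by linarith) _
  have hx' : x ^ j = x * x ^ (j - 1) := by
    rw [← pow_succ']
    congr 1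
    omega
  have hxy' : (x + y) ^ j = (x + y) * (x + y) ^ (j - 1) := by
    rw [← pow_succ']
    congr 1
    omega
  have h2 : (x + y) * x ^ j ≤ x * (x + y) ^ j := by
    rw [hx', hxy']
    calc (x + y) * (x * x ^ (j - 1)) = (x * (x + y)) * x ^ (j - 1) := by ring
      _ ≤ (x * (x + y)) * (x + y) ^ (j - 1) := by
          refine mul_le_mul_of_nonneg_left hpow ?_
          positivity
      _ = x * ((x + y) * (x + y) ^ (j - 1)) := by ring
  calc (2 * (j : ℝ) + 1) * (x + y) * x ^ j * y ^ j
      = ((x + y) * x ^ j) * ((2 * (j : ℝ) + 1) * y ^ j) := by ring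
    _ ≤ (x * (x + y) ^ j) * ((2 * (j : ℝ) + 1) * y ^ j) := by
        refine mul_le_mul_of_nonneg_right h2 ?_
        positivity
    _ = (2 * (j : ℝ) + 1) * x * y ^ j * (x + y) ^ j := by ring
    _ ≤ _ := h1

lemma main_pos (j : ℕ) (hj : 1 ≤ j) (k₁ k₂ : ℝ) (h₁ : k₁ ≠ 0) (h₂ : k₂ ≠ 0)
    (hs : 0 < k₁ + k₂) :
    (2 * (j : ℝ) + 1) * |k₁ + k₂| * |k₁| ^ j * |k₂| ^ j ≤
      |(k₁ + k₂) ^ (2 * j + 1) - k₁ ^ (2 * j + 1) - k₂ ^ (2 * j + 1)| := by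
  have hodd : Odd (2 * j + 1) := ⟨j, by ring⟩
  rcases h₁.lt_or_gt with hn1 | hp1 <;> rcases h₂.lt_or_gt with hn2 | hp2
  · linarith
  · -- k₁ < 0 < k₂
    have hv : (0 : ℝ) < -k₁ := by linarith
    have h := diff_bound j hj (k₁ + k₂) (-k₁) hs hv
    rw [show k₁ + k₂ + -k₁ = k₂ by ring, hodd.neg_pow] at h
    rw [abs_of_pos hs, abs_of_neg hn1, abs_of_pos hp2]
    refine le_trans ?_ (neg_le_abs _)
    linarith
  · -- k₂ < 0 < k₁
    have hv : (0 : ℝ) < -k₂ := by linarith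
    have h := diff_bound j hj (k₁ + k₂) (-k₂) hs hv
    rw [show k₁ + k₂ + -k₂ = k₁ by ring, hodd.neg_pow] at h
    rw [abs_of_pos hs, abs_of_pos hp1, abs_of_neg hn2]
    refine le_trans ?_ (neg_le_abs _)
    calc (2 * (j : ℝ) + 1) * (k₁ + k₂) * k₁ ^ j * (-k₂) ^ j
        = (2 * (j : ℝ) + 1) * (k₁ + k₂) * (-k₂) ^ j * k₁ ^ j := by ring
      _ ≤ _ := by linarith
  · -- both positive
    have h := diff_bound' j hj k₁ k₂ hp1 hp2
    rw [abs_of_pos hs, abs_of_pos hp1, abs_of_pos hp2]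
    refine le_trans h ?_
    exact le_abs_self _

lemma main_abs (j : ℕ) (hj : 1 ≤ j) (k₁ k₂ : ℝ) (h₁ : k₁ ≠ 0) (h₂ : k₂ ≠ 0)
    (hk : k₁ + k₂ ≠ 0) :
    (2 * (j : ℝ) + 1) * |k₁ + k₂| * |k₁| ^ j * |k₂| ^ j ≤
      |(k₁ + k₂) ^ (2 * j + 1) - k₁ ^ (2 * j + 1) - k₂ ^ (2 * j + 1)| := by
  have hodd : Odd (2 * j + 1) := ⟨j, by ring⟩
  rcases hk.lt_or_gt with hneg | hpos
  · have h := main_pos j hj (-k₁) (-k₂) (neg_ne_zero.mpr h₁) (neg_ne_zero.mpr h₂)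
      (by linarith)
    rw [show -k₁ + -k₂ = -(k₁ + k₂) by ring, hodd.neg_pow, hodd.neg_pow, hodd.neg_pow,
      abs_neg, abs_neg, abs_neg] at h
    calc (2 * (j : ℝ) + 1) * |k₁ + k₂| * |k₁| ^ j * |k₂| ^ j
        ≤ |-(k₁ + k₂) ^ (2 * j + 1) - -k₁ ^ (2 * j + 1) - -k₂ ^ (2 * j + 1)| := h
      _ = |(k₁ + k₂) ^ (2 * j + 1) - k₁ ^ (2 * j + 1) - k₂ ^ (2 * j + 1)| := by
          rw [← abs_neg]; ring_nf
  · exact main_pos j hj k₁ k₂ h₁ h₂ hpos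

/-- **Lemma 2.7.** For an integer `j ≥ 1`, nonzero reals `k₁, k₂` with `k = k₁ + k₂ ≠ 0`,
and reals `τ₁, τ₂` with `τ = τ₁ + τ₂`, the modulations `σ = τ − k^{2j+1}`,
`σᵢ = τᵢ − kᵢ^{2j+1}` satisfy
`3·max{|σ|,|σ₁|,|σ₂|} ≥ |σ − σ₁ − σ₂| = |k^{2j+1} − k₁^{2j+1} − k₂^{2j+1}|
  ≥ (2j+1)·|k|·|k₁|^j·|k₂|^j`. -/
theorem stmt_1 (j : ℕ) (hj : 1 ≤ j) (k₁ k₂ τ₁ τ₂ : ℝ) (hk₁ : k₁ ≠ 0) (hk₂ : k₂ ≠ 0)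
    (hk : k₁ + k₂ ≠ 0) :
    |((τ₁ + τ₂) - (k₁ + k₂) ^ (2 * j + 1)) - (τ₁ - k₁ ^ (2 * j + 1)) -
        (τ₂ - k₂ ^ (2 * j + 1))| ≤
      3 * max |(τ₁ + τ₂) - (k₁ + k₂) ^ (2 * j + 1)|
          (max |τ₁ - k₁ ^ (2 * j + 1)| |τ₂ - k₂ ^ (2 * j + 1)|) ∧
    |((τ₁ + τ₂) - (k₁ + k₂) ^ (2 * j + 1)) - (τ₁ - k₁ ^ (2 * j + 1)) -
        (τ₂ - k₂ ^ (2 * j + 1))| =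
      |(k₁ + k₂) ^ (2 * j + 1) - k₁ ^ (2 * j + 1) - k₂ ^ (2 * j + 1)| ∧
    (2 * (j : ℝ) + 1) * |k₁ + k₂| * |k₁| ^ j * |k₂| ^ j ≤
      |(k₁ + k₂) ^ (2 * j + 1) - k₁ ^ (2 * j + 1) - k₂ ^ (2 * j + 1)| := by
  set σ := (τ₁ + τ₂) - (k₁ + k₂) ^ (2 * j + 1) with hσ
  set σ₁ := τ₁ - k₁ ^ (2 * j + 1) with hσ₁
  set σ₂ := τ₂ - k₂ ^ (2 * j + 1) with hσ₂
  refine ⟨?_, ?_, ?_⟩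
  · have hM1 : |σ| ≤ max |σ| (max |σ₁| |σ₂|) := le_max_left _ _
    have hM2 : |σ₁| ≤ max |σ| (max |σ₁| |σ₂|) :=
      le_trans (le_max_left _ _) (le_max_right _ _)
    have hM3 : |σ₂| ≤ max |σ| (max |σ₁| |σ₂|) :=
      le_trans (le_max_right _ _) (le_max_right _ _)
    rw [abs_le]
    constructor
    · linarith [neg_abs_le σ, le_abs_self σ₁, le_abs_self σ₂]
    · linarith [le_abs_self σ, neg_abs_le σ₁, neg_abs_le σ₂]
  · rw [show σ - σ₁ - σ₂ =
      -((k₁ + k₂) ^ (2 * j + 1) - k₁ ^ (2 * j + 1) - k₂ ^ (2 * j + 1)) from by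
        rw [hσ, hσ₁, hσ₂]; ring, abs_neg]
  · exact main_abs j hj k₁ k₂ hk₁ hk₂ hk
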